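/- arXiv:1412.0725 — 2 statements merged into one kernel-verified Lean document; each statement's English description precedes it below -/
import Mathlib

section
/- For α(u) = 1 − (log(u + e²))^{−ε} with ε ≥ 1, one has limsup_{R→∞} R ∫_R^∞ u^{−1−α(u)} du < ∞, i.e., R ∫_R^∞ u^{−2+(log(u+e²))^{−ε}} du is bounded as R → ∞. -/
open MeasureTheory Filter

theorem stmt_8 (ε : ℝ) (hε : 1 ≤ ε) :
    ∃ C : ℝ, ∀ᶠ R : ℝ in atTop,
      R * ∫ u in Set.Ioi R, u ^ (-2 + (Real.log (u + Real.exp 2)) ^ (-ε)) ≤ C := by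
  refine ⟨2 * Real.exp 1, ?_⟩
  filter_upwards [eventually_ge_atTop (Real.exp 2)] with R hR
  have he2 : (1 : ℝ) < Real.exp 2 := by
    have := Real.add_one_lt_exp (x := 2) (by norm_num); linarith
  have hR1 : (1 : ℝ) ≤ R := le_trans he2.le hR
  have hR0 : (0 : ℝ) < R := lt_of_lt_of_le one_pos hR1
  set δ : ℝ := (Real.log (R + Real.exp 2)) ^ (-ε) with hδdef
  have hlog2 : (2 : ℝ) ≤ Real.log (R + Real.exp 2) := by
    rw [Real.le_log_iff_exp_le (by positivity)]
    linarith [Real.exp_pos 2]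
  have hlogpos : (0 : ℝ) < Real.log (R + Real.exp 2) := by linarith
  have hδ_half : δ ≤ 1 / 2 := by
    rw [hδdef, Real.rpow_neg hlogpos.le]
    rw [inv_le_comm₀ (Real.rpow_pos_of_pos hlogpos ε) (by norm_num)]
    calc ((1:ℝ) / 2)⁻¹ = 2 := by norm_num
      _ ≤ Real.log (R + Real.exp 2) := hlog2
      _ = (Real.log (R + Real.exp 2)) ^ (1:ℝ) := (Real.rpow_one _).symm
      _ ≤ (Real.log (R + Real.exp 2)) ^ ε :=
          Real.rpow_le_rpow_of_exponent_le (by linarith) hε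
  have hδ_pos : 0 < δ := Real.rpow_pos_of_pos hlogpos _
  have ha : -2 + δ < -1 := by linarith
  -- pointwise bound on Ioi R
  have hbound : ∀ u ∈ Set.Ioi R,
      u ^ (-2 + (Real.log (u + Real.exp 2)) ^ (-ε)) ≤ u ^ (-2 + δ) := by
    intro u hu
    have hu1 : (1 : ℝ) ≤ u := le_trans hR1 (le_of_lt hu)
    apply Real.rpow_le_rpow_of_exponent_le hu1
    have hlogu : Real.log (R + Real.exp 2) ≤ Real.log (u + Real.exp 2) :=
      Real.log_le_log (by positivity) (by linarith [Set.mem_Ioi.mp hu])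
    have : (Real.log (u + Real.exp 2)) ^ (-ε) ≤ δ := by
      rw [hδdef, Real.rpow_neg hlogpos.le,
        Real.rpow_neg (by linarith : (0:ℝ) ≤ Real.log (u + Real.exp 2))]
      apply inv_anti₀ (Real.rpow_pos_of_pos hlogpos _)
      exact Real.rpow_le_rpow hlogpos.le hlogu (by linarith)
    linarith
  have hint_g : IntegrableOn (fun u : ℝ => u ^ (-2 + δ)) (Set.Ioi R) :=
    integrableOn_Ioi_rpow_of_lt ha hR0
  -- measurability of f on Ioi R
  have hcont : ContinuousOn
      (fun u : ℝ => u ^ (-2 + (Real.log (u + Real.exp 2)) ^ (-ε))) (Set.Ioi R) := by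
    apply ContinuousOn.rpow continuousOn_id
    · apply ContinuousOn.add continuousOn_const
      apply ContinuousOn.rpow _ continuousOn_const
      · intro u hu
        left
        have hu0 : 0 < u := lt_trans hR0 hu
        exact (Real.log_pos (by linarith)).ne'
      · apply ContinuousOn.log
        · exact (continuousOn_id.add continuousOn_const)
        · intro u hu
          have hu0 : 0 < u := lt_trans hR0 hu
          positivity
    · intro u hu
      exact Or.inl (ne_of_gt (lt_trans hR0 hu))
  have hmeas := hcont.aestronglyMeasurable (μ := volume) measurableSet_Ioi
  -- integrability of f
  have hint_f : IntegrableOn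
      (fun u : ℝ => u ^ (-2 + (Real.log (u + Real.exp 2)) ^ (-ε))) (Set.Ioi R) := by
    apply hint_g.mono' hmeas
    filter_upwards [ae_restrict_mem measurableSet_Ioi] with u hu
    rw [Real.norm_eq_abs, abs_of_nonneg (Real.rpow_nonneg (le_trans hR0.le (le_of_lt hu)) _)]
    exact hbound u hu
  have hIle : (∫ u in Set.Ioi R, u ^ (-2 + (Real.log (u + Real.exp 2)) ^ (-ε)))
      ≤ ∫ u in Set.Ioi R, u ^ (-2 + δ) :=
    setIntegral_mono_on hint_f hint_g measurableSet_Ioi hbound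
  have hval : (∫ u in Set.Ioi R, u ^ (-2 + δ)) = R ^ (δ - 1) / (1 - δ) := by
    rw [integral_Ioi_rpow_of_lt ha hR0]
    rw [show -2 + δ + 1 = δ - 1 by ring]
    have h1 : δ - 1 ≠ 0 := by linarith
    have h2 : (1:ℝ) - δ ≠ 0 := by linarith
    field_simp
    ring
  have hval_le : (∫ u in Set.Ioi R, u ^ (-2 + δ)) ≤ 2 * R ^ (δ - 1) := by
    rw [hval]
    rw [div_le_iff₀ (by linarith)]
    have h1 : (0:ℝ) ≤ R ^ (δ - 1) := Real.rpow_nonneg hR0.le _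
    nlinarith
  -- R^δ ≤ e
  have hRδ : R ^ δ ≤ Real.exp 1 := by
    rw [Real.rpow_def_of_pos hR0]
    apply Real.exp_le_exp.mpr
    have hlogR : Real.log R ≤ (Real.log (R + Real.exp 2)) ^ ε := by
      calc Real.log R ≤ Real.log (R + Real.exp 2) :=
            Real.log_le_log hR0 (by linarith [Real.exp_pos 2])
        _ = (Real.log (R + Real.exp 2)) ^ (1:ℝ) := (Real.rpow_one _).symm
        _ ≤ (Real.log (R + Real.exp 2)) ^ ε :=
            Real.rpow_le_rpow_of_exponent_le (by linarith) hε
    have hlogR0 : 0 ≤ Real.log R := Real.log_nonneg hR1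
    have hδinv : δ = ((Real.log (R + Real.exp 2)) ^ ε)⁻¹ := by
      rw [hδdef, Real.rpow_neg hlogpos.le]
    calc Real.log R * δ ≤ (Real.log (R + Real.exp 2)) ^ ε * δ := by
          apply mul_le_mul_of_nonneg_right hlogR hδ_pos.le
      _ = 1 := by
          rw [hδinv]
          exact mul_inv_cancel₀ (ne_of_gt (Real.rpow_pos_of_pos hlogpos ε))
  calc R * ∫ u in Set.Ioi R, u ^ (-2 + (Real.log (u + Real.exp 2)) ^ (-ε))
      ≤ R * (2 * R ^ (δ - 1)) := by
        apply mul_le_mul_of_nonneg_left (le_trans hIle hval_le) hR0.le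
    _ = 2 * R ^ δ := by
        rw [show R ^ δ = R ^ (1 + (δ - 1)) by ring_nf,
          Real.rpow_add hR0, Real.rpow_one]
        ring
    _ ≤ 2 * Real.exp 1 := by linarith
end

section
/- Let φ(ξ) = ∫_ℝ (1 − cos(ξh)) |h|^{−1−α(|h|)} dh with α(u) = 1 − (log(u+e²))^{−ε}, ε > 0. Then for 0 < |ξ| < 1, φ(ξ) ≥ c |ξ|^{1 − (log(π/|ξ| + e²))^{−ε}}, where c = ∫_{π/2}^{π} (1 − cos u) u^{−2} du > 0. -/
open MeasureTheory Real

lemma aux_int (F : ℝ → ℝ) (hF : Continuous F) (p a b : ℝ) (ha : 0 < a) :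
    IntegrableOn (fun u : ℝ => F u * u ^ p) (Set.Ioo a b) := by
  refine (ContinuousOn.integrableOn_Icc ?_).mono_set Set.Ioo_subset_Icc_self
  refine ContinuousOn.mul hF.continuousOn ?_
  exact continuousOn_id.rpow_const (fun x hx => Or.inl (ne_of_gt (lt_of_lt_of_le ha hx.1)))

lemma aux_int' (F : ℝ → ℝ) (hF : Continuous F) (p a b : ℝ) (ha : 0 < a) (hab : a ≤ b) :
    IntervalIntegrable (fun u : ℝ => F u * u ^ p) volume a b := by
  rw [intervalIntegrable_iff_integrableOn_Ioo_of_le hab]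
  exact aux_int F hF p a b ha

theorem stmt_12 (ε : ℝ) (hε : 0 < ε)
    (α : ℝ → ℝ) (hα : ∀ u, α u = 1 - (Real.log (u + Real.exp 2)) ^ (-ε))
    (hint : ∀ ξ : ℝ, Integrable
      (fun h : ℝ => (1 - Real.cos (ξ * h)) * |h| ^ (-1 - α |h|)) volume) :
    0 < ∫ u in Set.Ioo (Real.pi / 2) Real.pi, (1 - Real.cos u) * u ^ (-2 : ℝ) ∧
    ∀ ξ : ℝ, 0 < |ξ| → |ξ| < 1 →
      (∫ u in Set.Ioo (Real.pi / 2) Real.pi, (1 - Real.cos u) * u ^ (-2 : ℝ)) *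
          |ξ| ^ (1 - (Real.log (Real.pi / |ξ| + Real.exp 2)) ^ (-ε)) ≤
        ∫ h : ℝ, (1 - Real.cos (ξ * h)) * |h| ^ (-1 - α |h|) := by
  have hπ := Real.pi_pos
  have hπ3 := Real.pi_gt_three
  have h2 : (Real.pi / 2 : ℝ) < Real.pi := by linarith
  constructor
  · rw [← integral_Ioc_eq_integral_Ioo, ← intervalIntegral.integral_of_le h2.le]
    refine intervalIntegral.intervalIntegral_pos_of_pos_on ?_ ?_ h2
    · refine aux_int' _ (continuous_const.sub Real.continuous_cos) _ _ _ (by linarith) h2.le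
    · intro x hx
      have hx1 : (0:ℝ) < x := by have := hx.1; linarith
      have hc : Real.cos x ≤ 0 :=
        Real.cos_nonpos_of_pi_div_two_le_of_le hx.1.le (by have := hx.2; linarith)
      have : (0:ℝ) < 1 - Real.cos x := by linarith
      exact mul_pos this (Real.rpow_pos_of_pos hx1 _)
  · intro ξ hs hs1
    set L : ℝ := Real.log (Real.pi / |ξ| + Real.exp 2) with hLdef
    set β : ℝ := 1 - L ^ (-ε) with hβdef
    have hbξ : 0 < Real.pi / |ξ| := div_pos hπ hs
    have hL2 : (2:ℝ) ≤ L := by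
      rw [hLdef]
      calc (2:ℝ) = Real.log (Real.exp 2) := (Real.log_exp 2).symm
        _ ≤ _ := Real.log_le_log (Real.exp_pos 2) (by linarith)
    have hL0 : (0:ℝ) < L := by linarith
    have hβ1 : β ≤ 1 := by
      have := Real.rpow_nonneg hL0.le (-ε); rw [hβdef]; linarith
    set a : ℝ := Real.pi / (2 * |ξ|) with hadef
    set b : ℝ := Real.pi / |ξ| with hbdef
    have hpa : Real.pi / 2 ≤ a := by
      rw [hadef]; gcongr; linarith
    have h1a : (1:ℝ) < a := by linarith
    have hab : a < b := by
      rw [hadef, hbdef]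
      exact div_lt_div_of_pos_left hπ hs (by linarith)
    have hapos : (0:ℝ) < a := by linarith
    have hsa : |ξ| * a = Real.pi / 2 := by
      rw [hadef]; field_simp
    have hsb : |ξ| * b = Real.pi := by
      rw [hbdef]; field_simp
    -- Step A : c ≤ ∫ G over Ioo (π/2) π where G u = (1-cos u) * u^(-1-β)
    have hA : (∫ u in Set.Ioo (Real.pi / 2) Real.pi, (1 - Real.cos u) * u ^ (-2 : ℝ)) ≤
        ∫ u in Set.Ioo (Real.pi / 2) Real.pi, (1 - Real.cos u) * u ^ (-1 - β) := by
      refine setIntegral_mono_on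
        (aux_int _ (continuous_const.sub Real.continuous_cos) _ _ _ (by linarith))
        (aux_int _ (continuous_const.sub Real.continuous_cos) _ _ _ (by linarith))
        measurableSet_Ioo ?_
      intro u hu
      have hu1 : (1:ℝ) ≤ u := by have := hu.1; linarith
      have hcos : Real.cos u ≤ 1 := Real.cos_le_one u
      refine mul_le_mul_of_nonneg_left ?_ (by linarith)
      exact Real.rpow_le_rpow_of_exponent_le hu1 (by linarith)
    -- Step B : substitution
    have hB : |ξ| ^ β * ∫ u in Set.Ioo (Real.pi / 2) Real.pi, (1 - Real.cos u) * u ^ (-1 - β)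
        = ∫ h in Set.Ioo a b, (1 - Real.cos (|ξ| * h)) * h ^ (-1 - β) := by
      rw [← integral_Ioc_eq_integral_Ioo, ← integral_Ioc_eq_integral_Ioo,
        ← intervalIntegral.integral_of_le hab.le, ← intervalIntegral.integral_of_le h2.le]
      have hcongr : ∀ h ∈ Set.uIcc a b,
          (1 - Real.cos (|ξ| * h)) * h ^ (-1 - β)
          = |ξ| ^ (1 + β) * ((1 - Real.cos (|ξ| * h)) * (|ξ| * h) ^ (-1 - β)) := by
        intro h hh
        rw [Set.uIcc_of_le hab.le] at hh
        have hh0 : (0:ℝ) < h := lt_of_lt_of_le hapos hh.1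
        have key : |ξ| ^ (1 + β) * |ξ| ^ (-1 - β) = 1 := by
          rw [← Real.rpow_add hs]; norm_num
        rw [Real.mul_rpow hs.le hh0.le]
        linear_combination (-((1 - Real.cos (|ξ| * h)) * h ^ (-1 - β))) * key
      rw [intervalIntegral.integral_congr hcongr]
      rw [intervalIntegral.integral_const_mul]
      rw [intervalIntegral.integral_comp_mul_left
        (fun u => (1 - Real.cos u) * u ^ (-1 - β)) (ne_of_gt hs), hsa, hsb]
      rw [smul_eq_mul, ← mul_assoc, ← Real.rpow_neg_one |ξ|, ← Real.rpow_add hs]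
      norm_num
    -- Step C : pointwise comparison on Ioo a b
    have hC : (∫ h in Set.Ioo a b, (1 - Real.cos (|ξ| * h)) * h ^ (-1 - β)) ≤
        ∫ h in Set.Ioo a b, (1 - Real.cos (ξ * h)) * |h| ^ (-1 - α |h|) := by
      refine setIntegral_mono_on
        (aux_int _ (continuous_const.sub (Real.continuous_cos.comp
          (continuous_const.mul continuous_id))) _ _ _ hapos)
        ((hint ξ).integrableOn) measurableSet_Ioo ?_
      intro h hh
      have hh1 : (1:ℝ) < h := lt_trans h1a hh.1
      have hh0 : (0:ℝ) < h := by linarith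
      have hcoseq : Real.cos (ξ * h) = Real.cos (|ξ| * h) := by
        rw [← Real.cos_abs (ξ * h), abs_mul, abs_of_pos hh0]
      rw [abs_of_pos hh0, hcoseq]
      have hcos : Real.cos (|ξ| * h) ≤ 1 := Real.cos_le_one _
      refine mul_le_mul_of_nonneg_left ?_ (by linarith)
      refine Real.rpow_le_rpow_of_exponent_le hh1.le ?_
      have hlogpos : (0:ℝ) < Real.log (h + Real.exp 2) := by
        refine Real.log_pos ?_
        have := Real.exp_pos 2; linarith
      have hlogle : Real.log (h + Real.exp 2) ≤ L := by
        rw [hLdef, hbdef]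
        exact Real.log_le_log (by positivity) (by have := hh.2; rw [hbdef] at this; linarith)
      have hexp : L ^ (-ε) ≤ (Real.log (h + Real.exp 2)) ^ (-ε) := by
        rw [Real.rpow_neg hL0.le, Real.rpow_neg hlogpos.le]
        exact inv_anti₀ (Real.rpow_pos_of_pos hlogpos ε)
          (Real.rpow_le_rpow hlogpos.le hlogle hε.le)
      rw [hα h]
      linarith
    -- Step D : extend to ℝ
    have hD : (∫ h in Set.Ioo a b, (1 - Real.cos (ξ * h)) * |h| ^ (-1 - α |h|)) ≤
        ∫ h : ℝ, (1 - Real.cos (ξ * h)) * |h| ^ (-1 - α |h|) := by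
      refine setIntegral_le_integral (hint ξ) (Filter.Eventually.of_forall fun h => ?_)
      have hcos : Real.cos (ξ * h) ≤ 1 := Real.cos_le_one _
      exact mul_nonneg (by linarith) (Real.rpow_nonneg (abs_nonneg h) _)
    have hξβ : (0:ℝ) ≤ |ξ| ^ β := Real.rpow_nonneg hs.le β
    calc (∫ u in Set.Ioo (Real.pi / 2) Real.pi, (1 - Real.cos u) * u ^ (-2 : ℝ)) * |ξ| ^ β
        ≤ (∫ u in Set.Ioo (Real.pi / 2) Real.pi, (1 - Real.cos u) * u ^ (-1 - β)) * |ξ| ^ β :=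
          mul_le_mul_of_nonneg_right hA hξβ
      _ = |ξ| ^ β * ∫ u in Set.Ioo (Real.pi / 2) Real.pi, (1 - Real.cos u) * u ^ (-1 - β) :=
          mul_comm _ _
      _ = ∫ h in Set.Ioo a b, (1 - Real.cos (|ξ| * h)) * h ^ (-1 - β) := hB
      _ ≤ ∫ h in Set.Ioo a b, (1 - Real.cos (ξ * h)) * |h| ^ (-1 - α |h|) := hC
      _ ≤ ∫ h : ℝ, (1 - Real.cos (ξ * h)) * |h| ^ (-1 - α |h|) := hD
end
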